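/- In L₉ (with K = −3H + E₁ + ⋯ + E₉), there do not exist nine classes F₁, …, F₉ satisfying F_k·F_k = −2 and K·F_k = 0 for all k and F_j·F_k = 0 for all j ≠ k. (This is the homological part of Theorem 1.4 for N = 9: for CP² # 9CP²‾ even the homology classes of nine disjoint symplectic (−2)-spheres cannot exist.) -/
import Mathlib


/-- A class `aH + Σᵢ vᵢEᵢ` of the lattice `L_N` is encoded by the pair `(a, v)`.
The intersection form is `(a, v)·(a', v') = a·a' − Σᵢ vᵢv'ᵢ`. -/
def interL {N : ℕ} (A B : ℤ × (Fin N → ℤ)) : ℤ :=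
  A.1 * B.1 - ∑ i, A.2 i * B.2 i

/-- The canonical class `K = −3H + E₁ + ⋯ + E_N` of `L_N`. -/
def KclassL (N : ℕ) : ℤ × (Fin N → ℤ) := (-3, fun _ => 1)

abbrev V9 : Type := ℚ × (Fin 9 → ℚ)

/-- Pairing with `y`, as a linear map in the other variable. -/
def bq (y : V9) : V9 →ₗ[ℚ] ℚ where
  toFun x := x.1 * y.1 - ∑ i, x.2 i * y.2 i
  map_add' x z := by
    simp [add_mul, Finset.sum_add_distrib]
    ring
  map_smul' c x := by
    simp [mul_assoc]
    rw [mul_sub, Finset.mul_sum]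

def qz (A : ℤ × (Fin 9 → ℤ)) : V9 := ((A.1 : ℚ), fun i => (A.2 i : ℚ))

lemma bq_qz (A B : ℤ × (Fin 9 → ℤ)) : bq (qz B) (qz A) = (interL A B : ℚ) := by
  simp only [bq, qz, interL, LinearMap.coe_mk, AddHom.coe_mk]
  push_cast
  ring

/-- Homological part of Theorem 1.4 for `N = 9`: in `L₉` there do not exist
nine classes `F₁, …, F₉` with `F_k·F_k = −2`, `K·F_k = 0`, and `F_j·F_k = 0`
for `j ≠ k` (so even the homology classes of nine disjoint symplectic
`(−2)`-spheres in `CP² # 9CP²‾` cannot exist). -/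
theorem stmt6 :
    ¬ ∃ F : Fin 9 → ℤ × (Fin 9 → ℤ),
      (∀ k, interL (F k) (F k) = -2) ∧
      (∀ k, interL (KclassL 9) (F k) = 0) ∧
      (∀ j k, j ≠ k → interL (F j) (F k) = 0) := by
  rintro ⟨F, hFF, hKF, horth⟩
  set K9 : V9 := qz (KclassL 9) with hK9
  -- the functional x ↦ ⟨x, K⟩ is surjective
  have hsurj : Function.Surjective (bq K9) := by
    intro c
    refine ⟨(-c/3, 0), ?_⟩
    simp [bq, hK9, qz, KclassL]
  -- hence its kernel has dimension 9
  have hker : Module.finrank ℚ (LinearMap.ker (bq K9)) = 9 := by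
    have h1 := LinearMap.finrank_range_add_finrank_ker (bq K9)
    rw [LinearMap.range_eq_top.mpr hsurj] at h1
    simp at h1
    omega
  -- the family K, F₁, …, F₉
  set w : Fin 10 → V9 := Fin.cons K9 (fun k => qz (F k)) with hw
  have hw0 : w 0 = K9 := rfl
  have hws : ∀ i : Fin 9, w i.succ = qz (F i) := fun i => rfl
  -- all members lie in the kernel
  have hmem : ∀ i, w i ∈ LinearMap.ker (bq K9) := by
    intro i
    rw [LinearMap.mem_ker]
    refine Fin.cases ?_ ?_ i
    · rw [hw0, hK9, bq_qz]
      norm_num [interL, KclassL]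
    · intro j
      rw [hws, hK9, bq_qz]
      have h := hKF j
      have hsymm : interL (F j) (KclassL 9) = interL (KclassL 9) (F j) := by
        simp [interL, mul_comm]
      rw [hsymm, h]
      norm_num
  -- the family is linearly independent
  have hLI : LinearIndependent ℚ w := by
    rw [Fintype.linearIndependent_iff]
    intro c hc
    have key : ∀ j : Fin 9, c j.succ = 0 := by
      intro j
      have h0 := congrArg (bq (qz (F j))) hc
      rw [map_sum, map_zero] at h0
      simp only [map_smul, smul_eq_mul] at h0
      rw [Fin.sum_univ_succ] at h0
      have e0 : bq (qz (F j)) (w 0) = 0 := by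
        rw [hw0, hK9, bq_qz]
        exact_mod_cast hKF j
      have es : ∀ i : Fin 9, bq (qz (F j)) (w i.succ) = ((interL (F i) (F j) : ℤ) : ℚ) := by
        intro i; rw [hws, bq_qz]
      rw [e0] at h0
      simp only [es] at h0
      rw [Finset.sum_eq_single j] at h0
      · rw [hFF j] at h0
        push_cast at h0
        linarith
      · intro i _ hij
        rw [horth i j hij]
        push_cast
        ring
      · intro h; exact absurd (Finset.mem_univ j) h
    have hc0 : c 0 = 0 := by
      rw [Fin.sum_univ_succ] at hc
      simp only [key, zero_smul, Finset.sum_const_zero, add_zero] at hc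
      rw [hw0] at hc
      rcases smul_eq_zero.mp hc with h | h
      · exact h
      · exfalso
        have : K9.1 = -3 := by simp [hK9, qz, KclassL]
        rw [h] at this
        norm_num at this
    intro i
    refine Fin.cases hc0 key i
  -- lift to the kernel submodule
  set g : Fin 10 → LinearMap.ker (bq K9) := fun i => ⟨w i, hmem i⟩ with hg
  have hgLI : LinearIndependent ℚ g := by
    apply LinearIndependent.of_comp (LinearMap.ker (bq K9)).subtype
    exact hLI
  have hcard := hgLI.fintype_card_le_finrank
  rw [hker] at hcard
  simp at hcard
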